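/- In the greedy matrix A(1), the top-left 3×3 block is [[1,1,0],[1,0,1],[0,1,1]], and A(1) is periodic with preperiod 0 and period 3: a_{i+3,j+3}=a_{ij} for all i,j ≥ 1. -/
import Mathlib

/-- Number of ones in row `k` strictly to the left of column `l` (columns `1..l-1`). -/
def rowOnes (a : ℕ → ℕ → Bool) (k l : ℕ) : ℕ :=
  ((Finset.Ico 1 l).filter (fun j => a k j = true)).card

/-- Number of ones in column `l` strictly above row `k` (rows `1..k-1`). -/
def colOnes (a : ℕ → ℕ → Bool) (k l : ℕ) : ℕ :=
  ((Finset.Ico 1 k).filter (fun i => a i l = true)).card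

/-- The greedy (first-choice) matrix `A(n)`: entries are placed row by row, left to
right; a one is placed at `(k,l)` unless the row already has `n+1` ones to the left,
the column already has `n+1` ones above, or a rectangle of ones would be created. -/
def IsGreedy (n : ℕ) (a : ℕ → ℕ → Bool) : Prop :=
  (∀ i j, i = 0 ∨ j = 0 → a i j = false) ∧
  ∀ k l, 1 ≤ k → 1 ≤ l →
    (a k l = true ↔
      rowOnes a k l < n + 1 ∧ colOnes a k l < n + 1 ∧
      ¬ ∃ i j, 1 ≤ i ∧ i < k ∧ 1 ≤ j ∧ j < l ∧
        a i j = true ∧ a i l = true ∧ a k j = true)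

/-- The explicit candidate for `A(1)`: block diagonal with 3×3 blocks `[[110],[101],[011]]`. -/
def fa (i j : ℕ) : Bool :=
  decide (1 ≤ i ∧ 1 ≤ j ∧ (i-1)/3 = (j-1)/3 ∧ (i-1)%3 + (j-1)%3 ≠ 2)

lemma fa_iff (i j : ℕ) : fa i j = true ↔
    (1 ≤ i ∧ 1 ≤ j ∧ (i-1)/3 = (j-1)/3 ∧ (i-1)%3 + (j-1)%3 ≠ 2) := by
  simp [fa]

lemma fa_symm (i j : ℕ) : fa i j = fa j i := by
  unfold fa; rw [decide_eq_decide]; constructor <;> (rintro ⟨h1,h2,h3,h4⟩; exact ⟨h2,h1,h3.symm, by omega⟩)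

/-- first one in row k -/
def e1 (k : ℕ) : ℕ := 3*((k-1)/3) + (if (k-1)%3 = 2 then 2 else 1)
/-- second one in row k -/
def e2 (k : ℕ) : ℕ := 3*((k-1)/3) + (if (k-1)%3 = 0 then 2 else 3)

lemma e1_pos (k : ℕ) : 1 ≤ e1 k := by unfold e1; split_ifs <;> omega
lemma e1_lt_e2 (k : ℕ) : e1 k < e2 k := by unfold e1 e2; split_ifs <;> omega

lemma fa_row (k : ℕ) (hk : 1 ≤ k) (j : ℕ) : fa k j = true ↔ (j = e1 k ∨ j = e2 k) := by
  simp only [fa, e1, e2, decide_eq_true_eq]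
  split_ifs <;> omega

lemma card_two (l f1 f2 : ℕ) (h1 : 1 ≤ f1) (h12 : f1 < f2) :
    ((Finset.Ico 1 l).filter (fun j => j = f1 ∨ j = f2)).card =
    (if f1 < l then 1 else 0) + (if f2 < l then 1 else 0) := by
  split_ifs with ha hb hb
  · have : (Finset.Ico 1 l).filter (fun j => j = f1 ∨ j = f2) = {f1, f2} := by
      ext x; simp [Finset.mem_Ico]; omega
    rw [this, Finset.card_insert_of_notMem (by simp; omega), Finset.card_singleton]
  · have : (Finset.Ico 1 l).filter (fun j => j = f1 ∨ j = f2) = {f1} := by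
      ext x; simp [Finset.mem_Ico]; omega
    rw [this, Finset.card_singleton]
  · omega
  · have : (Finset.Ico 1 l).filter (fun j => j = f1 ∨ j = f2) = ∅ := by
      ext x; simp [Finset.mem_Ico]; omega
    rw [this, Finset.card_empty]

lemma rowOnes_fa (k l : ℕ) (hk : 1 ≤ k) :
    rowOnes fa k l = (if e1 k < l then 1 else 0) + (if e2 k < l then 1 else 0) := by
  rw [← card_two l (e1 k) (e2 k) (e1_pos k) (e1_lt_e2 k)]
  unfold rowOnes
  congr 1
  apply Finset.filter_congr
  intro j _
  simp [fa_row k hk j]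

lemma colOnes_fa (k l : ℕ) : colOnes fa k l = rowOnes fa l k := by
  unfold colOnes rowOnes
  congr 1
  apply Finset.filter_congr
  intro i _
  rw [fa_symm i l]

lemma fa_greedy (k l : ℕ) (hk : 1 ≤ k) (hl : 1 ≤ l) :
    fa k l = true ↔
      rowOnes fa k l < 2 ∧ colOnes fa k l < 2 ∧
      ¬ ∃ i j, 1 ≤ i ∧ i < k ∧ 1 ≤ j ∧ j < l ∧
        fa i j = true ∧ fa i l = true ∧ fa k j = true := by
  rw [rowOnes_fa k l hk, colOnes_fa, rowOnes_fa l k hl]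
  constructor
  · intro hfa
    obtain ⟨-, -, hpq, h3⟩ := (by simpa only [fa, decide_eq_true_eq] using hfa :
      1 ≤ k ∧ 1 ≤ l ∧ (k-1)/3 = (l-1)/3 ∧ (k-1)%3 + (l-1)%3 ≠ 2)
    refine ⟨?_, ?_, ?_⟩
    · unfold e1 e2; split_ifs <;> omega
    · unfold e1 e2; split_ifs <;> omega
    · rintro ⟨i, j, h1, h2, h3', h4, h5, h6, h7⟩
      simp only [fa, decide_eq_true_eq] at h5 h6 h7
      omega
  · rintro ⟨hrow, hcol, hnr⟩
    have h2 : l ≤ e2 k := by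
      by_contra hc
      push_neg at hc
      have h1 := e1_lt_e2 k
      rw [if_pos (by omega), if_pos hc] at hrow
      omega
    have h2' : k ≤ e2 l := by
      by_contra hc
      push_neg at hc
      have h1 := e1_lt_e2 l
      rw [if_pos (by omega), if_pos hc] at hcol
      omega
    have hpq : (k-1)/3 = (l-1)/3 := by
      unfold e2 at h2 h2'
      split_ifs at h2 h2' <;> omega
    have h3 : (k-1)%3 + (l-1)%3 ≠ 2 := by
      intro hc
      have hr : (k-1)%3 = 0 ∨ (k-1)%3 = 1 ∨ (k-1)%3 = 2 := by omega
      rcases hr with hr | hr | hr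
      · unfold e2 at h2; split_ifs at h2 <;> omega
      · exact hnr ⟨3*((k-1)/3)+1, 3*((k-1)/3)+1, by omega, by omega, by omega, by omega,
          (fa_iff _ _).mpr (by omega), (fa_iff _ _).mpr (by omega), (fa_iff _ _).mpr (by omega)⟩
      · unfold e2 at h2'; split_ifs at h2' <;> omega
    simp only [fa, decide_eq_true_eq]
    exact ⟨hk, hl, hpq, h3⟩

/-- The greedy matrix `A(1)` has top-left `3×3` block `[[1,1,0],[1,0,1],[0,1,1]]`
and is periodic with preperiod `0` and period `3`. -/
theorem stmt16 (a : ℕ → ℕ → Bool) (h : IsGreedy 1 a) :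
    (a 1 1 = true ∧ a 1 2 = true ∧ a 1 3 = false ∧
     a 2 1 = true ∧ a 2 2 = false ∧ a 2 3 = true ∧
     a 3 1 = false ∧ a 3 2 = true ∧ a 3 3 = true) ∧
    ∀ i j, 1 ≤ i → 1 ≤ j → a (i + 3) (j + 3) = a i j := by
  obtain ⟨hb, hg⟩ := h
  have main : ∀ k l, a k l = fa k l := by
    have H : ∀ N k l, k + l ≤ N → a k l = fa k l := by
      intro N
      induction N with
      | zero =>
        intro k l hN
        have hk : k = 0 := by omega
        rw [hb k l (Or.inl hk), hk]
        simp [fa]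
      | succ N ih =>
        intro k l hN
        rcases Nat.eq_or_lt_of_le hN with heq | hlt
        · by_cases hk : k = 0
          · rw [hb k l (Or.inl hk), hk]; simp [fa]
          by_cases hl : l = 0
          · rw [hb k l (Or.inr hl), hl]; simp [fa]
          have hk1 : 1 ≤ k := by omega
          have hl1 : 1 ≤ l := by omega
          have hrow : rowOnes a k l = rowOnes fa k l := by
            unfold rowOnes
            congr 1
            apply Finset.filter_congr
            intro j hj
            rw [Finset.mem_Ico] at hj
            rw [ih k j (by omega)]
          have hcol : colOnes a k l = colOnes fa k l := by
            unfold colOnes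
            congr 1
            apply Finset.filter_congr
            intro i hi
            rw [Finset.mem_Ico] at hi
            rw [ih i l (by omega)]
          have hrect : (∃ i j, 1 ≤ i ∧ i < k ∧ 1 ≤ j ∧ j < l ∧
              a i j = true ∧ a i l = true ∧ a k j = true) ↔
              (∃ i j, 1 ≤ i ∧ i < k ∧ 1 ≤ j ∧ j < l ∧
              fa i j = true ∧ fa i l = true ∧ fa k j = true) := by
            constructor
            · rintro ⟨i, j, h1, h2, h3, h4, h5, h6, h7⟩
              rw [ih i j (by omega)] at h5
              rw [ih i l (by omega)] at h6
              rw [ih k j (by omega)] at h7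
              exact ⟨i, j, h1, h2, h3, h4, h5, h6, h7⟩
            · rintro ⟨i, j, h1, h2, h3, h4, h5, h6, h7⟩
              rw [← ih i j (by omega)] at h5
              rw [← ih i l (by omega)] at h6
              rw [← ih k j (by omega)] at h7
              exact ⟨i, j, h1, h2, h3, h4, h5, h6, h7⟩
          have hiff : a k l = true ↔ fa k l = true := by
            rw [hg k l hk1 hl1, fa_greedy k l hk1 hl1, hrow, hcol, hrect]
          cases hx : fa k l with
          | false =>
            rw [Bool.eq_false_iff]
            intro hc
            have := hiff.mp hc
            rw [hx] at this
            exact Bool.noConfusion this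
          | true => exact hiff.mpr hx
        · exact ih k l (by omega)
    intro k l; exact H (k + l) k l le_rfl
  constructor
  · refine ⟨?_, ?_, ?_, ?_, ?_, ?_, ?_, ?_, ?_⟩ <;> rw [main] <;> decide
  · intro i j hi hj
    rw [main, main]
    unfold fa
    rw [decide_eq_decide]
    omega
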